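/- Let F ∈ ℂ, k ∈ ℤ∖{0}, a ∈ ℂ∖{0}, m ∈ ℂ, and let b ∈ ℂ satisfy kb = 1. On V define linear operators 𝕃_n, 𝕀_n by 𝕃_n(v_t) = (t+n)v_{n+t} for all t, 𝕀_n(v_t) = 0 for t ≠ 0, 𝕀_n(v_0) = nF·v_n, and define the linear map φ by φ(v_t) = aᵗ·m·v_{kt}. Then for all n ∈ ℤ: φ ∘ 𝕃_n = (1/k)aⁿ·𝕃_{kn} ∘ φ and φ ∘ 𝕀_n = aⁿb·𝕀_{kn} ∘ φ; consequently (φ∘𝕃_n)(v_t) = (t+n)·a^{n+t}·m·v_{k(n+t)} for all t, (φ∘𝕀_n)(v_t) = 0 for t ≠ 0, and (φ∘𝕀_n)(v_0) = nF·aⁿ·m·v_{kn}. -/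

import Mathlib

/-- The ℂ-vector space with basis `{v t : t ∈ ℤ}` (finitely supported functions ℤ → ℂ). -/
abbrev V : Type := ℤ →₀ ℂ

/-- The basis vector `v t`. -/
noncomputable def v (t : ℤ) : V := Finsupp.single t 1

/-- The linear operator on `V` determined by its values on the basis vectors. -/
noncomputable def op (f : ℤ → V) : V →ₗ[ℂ] V := Finsupp.lift V ℂ ℤ f

/-- The operator `𝕃 n` of the module `V_F`: `𝕃 n (v t) = (t+n) v (n+t)` for all `t`. -/
noncomputable def Lop (n : ℤ) : V →ₗ[ℂ] V :=
  op fun t => ((t : ℂ) + n) • v (n + t)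

/-- The operator `𝕀 n` of the module `V_F`:
`𝕀 n (v t) = 0` for `t ≠ 0`, `𝕀 n (v 0) = nF • v n`. -/
noncomputable def Iop (F : ℂ) (n : ℤ) : V →ₗ[ℂ] V :=
  op fun t => if t = 0 then ((n : ℂ) * F) • v n else 0

/-- The twisting linear map `φ (v t) = aᵗ m • v (kt)`. -/
noncomputable def φmap (a m : ℂ) (k : ℤ) : V →ₗ[ℂ] V :=
  op fun t => (a ^ t * m) • v (k * t)

lemma op_v (f : ℤ → V) (t : ℤ) : op f (v t) = f t := by
  rw [op, v, Finsupp.lift_apply, Finsupp.sum_single_index (zero_smul ℂ (f t)), one_smul]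

theorem V_F_intertwine (F : ℂ) (k : ℤ) (hk : k ≠ 0) (a : ℂ) (ha : a ≠ 0)
    (m b : ℂ) (hb : (k : ℂ) * b = 1) :
    (∀ n : ℤ, φmap a m k ∘ₗ Lop n
        = ((1 / (k : ℂ) * a ^ n) • Lop (k * n)) ∘ₗ φmap a m k) ∧
    (∀ n : ℤ, φmap a m k ∘ₗ Iop F n = ((a ^ n * b) • Iop F (k * n)) ∘ₗ φmap a m k) ∧
    (∀ n t : ℤ, φmap a m k (Lop n (v t))
        = (((t : ℂ) + n) * a ^ (n + t) * m) • v (k * (n + t))) ∧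
    (∀ n t : ℤ, t ≠ 0 → φmap a m k (Iop F n (v t)) = 0) ∧
    (∀ n : ℤ, φmap a m k (Iop F n (v 0)) = ((n : ℂ) * F * a ^ n * m) • v (k * n)) := by
  have hkC : (k : ℂ) ≠ 0 := Int.cast_ne_zero.mpr hk
  have hL : ∀ n t : ℤ, φmap a m k (Lop n (v t))
      = (((t : ℂ) + n) * a ^ (n + t) * m) • v (k * (n + t)) := by
    intro n t
    rw [Lop, op_v, map_smul, φmap, op_v]
    rw [smul_smul]
    congr 1
    rw [zpow_add₀ ha]
    ring
  have hI0 : ∀ n : ℤ, φmap a m k (Iop F n (v 0))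
      = ((n : ℂ) * F * a ^ n * m) • v (k * n) := by
    intro n
    rw [Iop, op_v, if_pos rfl, map_smul, φmap, op_v, smul_smul]
    congr 1
    ring
  have hIne : ∀ n t : ℤ, t ≠ 0 → φmap a m k (Iop F n (v t)) = 0 := by
    intro n t ht
    rw [Iop, op_v, if_neg ht, map_zero]
  refine ⟨?_, ?_, hL, hIne, hI0⟩
  · intro n
    apply Finsupp.lhom_ext'
    intro t
    apply LinearMap.ext_ring
    simp only [LinearMap.comp_apply, LinearMap.coe_comp, Function.comp_apply,
      Finsupp.lsingle_apply, LinearMap.smul_apply]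
    show φmap a m k (Lop n (v t)) = (1 / (k:ℂ) * a ^ n) • Lop (k*n) (φmap a m k (v t))
    rw [hL, φmap, op_v, map_smul, Lop, op_v, smul_smul, smul_smul]
    have : k * n + k * t = k * (n + t) := by ring
    rw [this]
    congr 1
    push_cast
    rw [zpow_add₀ ha]
    field_simp
  · intro n
    apply Finsupp.lhom_ext'
    intro t
    apply LinearMap.ext_ring
    simp only [LinearMap.coe_comp, Function.comp_apply, Finsupp.lsingle_apply,
      LinearMap.smul_apply]
    show φmap a m k (Iop F n (v t)) = (a ^ n * b) • Iop F (k*n) (φmap a m k (v t))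
    by_cases ht : t = 0
    · subst ht
      have hphi : φmap a m k (v 0) = m • v 0 := by
        rw [φmap, op_v]; simp
      rw [hI0, hphi, map_smul, Iop, op_v, if_pos rfl, smul_smul, smul_smul]
      congr 1
      push_cast
      linear_combination (-(a ^ n * (n:ℂ) * F * m)) * hb
    · rw [hIne n t ht, φmap, op_v, map_smul, Iop, op_v,
        if_neg (by exact fun h => ht (by exact mul_left_cancel₀ hk (by simpa using h)))]
      simp
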